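/- The binary tree parallel reduction computes the maximum: for an array a of length 2^k, iterating the step a'(i) = max(a(i), a(i + 2^(k-1-s))) for i < 2^(k-1-s) at stage s = 0,…,k-1 leaves the maximum of the original array in position 0. -/

import Mathlib

lemma sup'_range_double (n : ℕ) (hn : (Finset.range n).Nonempty) (f : ℕ → ℝ) :
    (Finset.range (2*n)).sup' (by
      rw [Finset.nonempty_range_iff] at *; omega) f =
    max ((Finset.range n).sup' hn (fun t => f (2*t)))
        ((Finset.range n).sup' hn (fun t => f (2*t+1))) := by
  apply le_antisymm
  · apply Finset.sup'_le
    intro t ht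
    rw [Finset.mem_range] at ht
    rcases Nat.even_or_odd t with ⟨u, hu⟩ | ⟨u, hu⟩
    · refine le_max_of_le_left ?_
      have := Finset.le_sup' (fun t => f (2*t)) (Finset.mem_range.mpr (show u < n by omega))
      simpa only [show 2*u = t by omega] using this
    · refine le_max_of_le_right ?_
      have := Finset.le_sup' (fun t => f (2*t+1)) (Finset.mem_range.mpr (show u < n by omega))
      simpa only [show 2*u+1 = t by omega] using this
  · apply max_le <;> exact Finset.sup'_le _ _ (fun t ht => Finset.le_sup' f
      (Finset.mem_range.mpr (by rw [Finset.mem_range] at ht; omega)))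

theorem tree_reduction_correct (k : ℕ) (a : ℕ → ℝ) (b : ℕ → ℕ → ℝ)
    (h0 : ∀ i, b 0 i = a i)
    (hstep : ∀ s : ℕ, s < k → ∀ i : ℕ, i < 2^(k-1-s) →
      b (s+1) i = max (b s i) (b s (i + 2^(k-1-s)))) :
    b k 0 = (Finset.range (2^k)).sup' (Finset.nonempty_range_iff.mpr (Nat.two_pow_pos k).ne') a := by
  have key : ∀ s, s ≤ k → ∀ i, i < 2^(k-s) →
      b s i = (Finset.range (2^s)).sup'
        (Finset.nonempty_range_iff.mpr (Nat.two_pow_pos s).ne')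
        (fun t => a (i + t * 2^(k-s))) := by
    intro s
    induction s with
    | zero =>
      intro _ i _
      simp [h0]
    | succ s ih =>
      intro hs i hi
      have hsk : s < k := by omega
      have hk1 : k - 1 - s = k - (s+1) := by omega
      have hks : k - s = (k - (s+1)) + 1 := by omega
      set m := 2^(k-(s+1)) with hm
      have h2m : 2^(k-s) = 2 * m := by rw [hks]; ring
      have h1 := hstep s hsk i (by rw [hk1]; omega)
      rw [hk1] at h1
      have hb1 := ih (by omega) i (by omega)
      have hb2 := ih (by omega) (i + m) (by omega)
      rw [h1, hb1, hb2]
      have hr : Finset.range (2^(s+1)) = Finset.range (2*2^s) := by ring_nf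
      rw [Finset.sup'_congr (Finset.nonempty_range_iff.mpr (Nat.two_pow_pos (s+1)).ne') hr
        (fun x _ => rfl)]
      rw [sup'_range_double (2^s) (Finset.nonempty_range_iff.mpr (Nat.two_pow_pos s).ne')]
      congr 1 <;> apply Finset.sup'_congr _ rfl <;> intro t _ <;>
        simp only [h2m] <;> ring_nf
  have := key k le_rfl 0 (by simp)
  rw [this]
  apply Finset.sup'_congr _ rfl
  intro t _
  simp
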